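/- Let X ∈ M₂(ℂ) and suppose the characteristic polynomial of X·X̄ factors as (t−λ)(t−μ) with λ, μ real numbers satisfying λ ≤ 0 and μ ≤ 0. Then λ = μ. -/

import Mathlib

open scoped ComplexOrder

noncomputable section

/-- The underlying real vector space of the Lie algebra `g` (coordinates w.r.t. `E₁,…,E₆`). -/
abbrev GV : Type := Fin 6 → ℝ

/-- The basis vectors `E₁,…,E₆` (indexed by `0,…,5`). -/
def E (i : Fin 6) : GV := Pi.single i 1

/-- The Lie bracket of `g`: the only nonzero brackets of basis vectors are
`[E₁,E₃] = -E₅`, `[E₂,E₄] = E₅`, `[E₁,E₄] = -E₆`, `[E₂,E₃] = -E₆`. -/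
def br (X Y : GV) : GV :=
  ![0, 0, 0, 0,
    -(X 0 * Y 2 - X 2 * Y 0) + (X 1 * Y 3 - X 3 * Y 1),
    -(X 0 * Y 3 - X 3 * Y 0) - (X 1 * Y 2 - X 2 * Y 1)]

/-- `J` is a complex structure: `J ∘ J = -id`. -/
def IsCpxStr (J : Module.End ℝ GV) : Prop := ∀ x, J (J x) = -x

/-- Integrability (Newlander–Nirenberg) condition. -/
def Integrable (J : Module.End ℝ GV) : Prop :=
  ∀ X Y, br (J X) (J Y) = br X Y + J (br (J X) Y) + J (br X (J Y))

/-- `J` induces the standard orientation of `g`. -/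
def PosOrient (J : Module.End ℝ GV) : Prop :=
  ∃ v₁ v₂ v₃ : GV,
    0 < (Matrix.of fun i j => ![v₁, J v₁, v₂, J v₂, v₃, J v₃] i j).det

/-- `C⁺(g)`: integrable complex structures inducing the standard orientation. -/
def Cplus : Set (Module.End ℝ GV) := {J | IsCpxStr J ∧ Integrable J ∧ PosOrient J}

/-- The inner product making `E₁,…,E₆` orthonormal. -/
def inner6 (x y : GV) : ℝ := ∑ i, x i * y i

def IsOrthog (J : Module.End ℝ GV) : Prop := ∀ x y, inner6 (J x) (J y) = inner6 x y

/-- `C⁺(g,g)`: orthogonal members of `C⁺(g)`. -/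
def Cgg : Set (Module.End ℝ GV) := {J | J ∈ Cplus ∧ IsOrthog J}

lemma le46 : (4:ℕ) ≤ 6 := by norm_num

/-- Determinant of `(w̄₁, Ĵw̄₁, w̄₂, Ĵw̄₂)` w.r.t. the basis `(Ē₁,…,Ē₄)` of `g/[g,g]`
(the coordinates of the class of `v` are the first four coordinates of `v`). -/
def hatDet (J : Module.End ℝ GV) (w₁ w₂ : GV) : ℝ :=
  (Matrix.of fun (i : Fin 4) (j : Fin 4) =>
    ![w₁, J w₁, w₂, J w₂] i (Fin.castLE le46 j)).det

/-- `C₊`: members of `C⁺(g)` whose induced structure on `g/[g,g]` is positively oriented. -/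
def CplusP : Set (Module.End ℝ GV) :=
  {J | J ∈ Cplus ∧ ∃ w₁ w₂ : GV, 0 < hatDet J w₁ w₂}

/-- `C₋`: members of `C⁺(g)` whose induced structure on `g/[g,g]` is negatively oriented. -/
def CplusM : Set (Module.End ℝ GV) :=
  {J | J ∈ Cplus ∧ ∃ w₁ w₂ : GV, hatDet J w₁ w₂ < 0}

/-- `ℂ ⊗ g*`, identified with coordinate vectors with respect to the dual basis `e¹,…,e⁶`. -/
abbrev MC : Type := Fin 6 → ℂ

/-- Evaluation of a complexified 1-form on a vector of `g`. -/
def ev (α : MC) (v : GV) : ℂ := ∑ i, α i * v i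

/-- The dual basis `e¹,…,e⁶` inside `ℂ ⊗ g*`. -/
def eC (i : Fin 6) : MC := Pi.single i 1

def w1 : MC := eC 0 + Complex.I • eC 1
def w2 : MC := eC 2 + Complex.I • eC 3
def w3 : MC := eC 4 + Complex.I • eC 5
/-- `ω̄¹` -/
def w1b : MC := eC 0 - Complex.I • eC 1
/-- `ω̄²` -/
def w2b : MC := eC 2 - Complex.I • eC 3
/-- `ω̄³` -/
def w3b : MC := eC 4 - Complex.I • eC 5

/-- The space of `(1,0)`-forms of `J`, a complex subspace of `ℂ ⊗ g*`. -/
def holSub (J : Module.End ℝ GV) : Submodule ℂ MC where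
  carrier := {α | ∀ v : GV, ev α (J v) = Complex.I * ev α v}
  add_mem' := by
    intro a b ha hb v
    simp only [ev, Pi.add_apply, add_mul, Finset.sum_add_distrib] at *
    rw [ha v, hb v]; ring
  zero_mem' := by intro v; simp [ev]
  smul_mem' := by
    intro c α hα v
    simp only [ev, Pi.smul_apply, smul_eq_mul, mul_assoc, ← Finset.mul_sum] at *
    rw [hα v]; ring
/-- `(α₁, α₂, α₃)` is a basis of the space of `(1,0)`-forms of `J`. -/
def IsHolBasis (J : Module.End ℝ GV) (α₁ α₂ α₃ : MC) : Prop :=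
  LinearIndependent ℂ ![α₁, α₂, α₃] ∧ Submodule.span ℂ {α₁, α₂, α₃} = holSub J

/-- Inclusion into the exterior algebra of `ℂ ⊗ g*`; wedge products are multiplications there. -/
def ι : MC →ₗ[ℂ] ExteriorAlgebra ℂ MC := ExteriorAlgebra.ι ℂ

/-- The standard bi-invariant complex structure `J₀`. -/
def J0 : Module.End ℝ GV :=
  Matrix.mulVecLin !![0,-1,0,0,0,0; 1,0,0,0,0,0; 0,0,0,-1,0,0;
                      0,0,1,0,0,0; 0,0,0,0,0,-1; 0,0,0,0,1,0]

/-- The vector space underlying `V = span(E₁,E₂,E₃,E₄)`. -/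
abbrev W4 : Type := Fin 4 → ℝ

/-- Inclusion `V = span(E₁,…,E₄) ↪ g`. -/
def incl (w : W4) : GV := fun i => if h : (i : ℕ) < 4 then w ⟨i, h⟩ else 0

def det4W (v : Fin 4 → W4) : ℝ := (Matrix.of fun i j => v i j).det

/-- The topology on the space of `ℝ`-linear endomorphisms of `g`
(as a subspace of the space of all maps `g → g`). -/
instance : TopologicalSpace (Module.End ℝ GV) :=
  TopologicalSpace.induced (fun f => (f : GV → GV)) inferInstance

/-- The span of `E₁,E₂,E₃,E₄`. -/
def V4span : Submodule ℝ GV := Submodule.span ℝ {E 0, E 1, E 2, E 3}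

-- conj of mulVec
lemma conj_mulVec (X : Matrix (Fin 2) (Fin 2) ℂ) (v : Fin 2 → ℂ) :
    (X.map (starRingEnd ℂ)).mulVec (fun i => (starRingEnd ℂ) (v i)) =
      fun i => (starRingEnd ℂ) (X.mulVec v i) := by
  funext i
  simp [Matrix.mulVec, dotProduct, Fin.sum_univ_two, map_add, _root_.map_mul]

-- dependence lemma
lemma dep_of_ker {M : Matrix (Fin 2) (Fin 2) ℂ} (hM : M ≠ 0) {v w : Fin 2 → ℂ}
    (hv : M.mulVec v = 0) (hw : M.mulVec w = 0) (hv0 : v ≠ 0) :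
    ∃ c : ℂ, w = c • v := by
  obtain ⟨i, j, hij⟩ : ∃ i j, M i j ≠ 0 := by
    by_contra hcon
    push_neg at hcon
    exact hM (by ext i j; simp [hcon])
  have hrv : M i 0 * v 0 + M i 1 * v 1 = 0 := by
    have := congrFun hv i
    simpa [Matrix.mulVec, dotProduct, Fin.sum_univ_two] using this
  have hrw : M i 0 * w 0 + M i 1 * w 1 = 0 := by
    have := congrFun hw i
    simpa [Matrix.mulVec, dotProduct, Fin.sum_univ_two] using this
  have hr : M i 0 ≠ 0 ∨ M i 1 ≠ 0 := by
    fin_cases j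
    · exact Or.inl hij
    · exact Or.inr hij
  have hcross : v 0 * w 1 - v 1 * w 0 = 0 := by
    rcases hr with h0 | h0
    · have h1 : v 0 = -(M i 1 * v 1) / M i 0 := by field_simp; linear_combination hrv
      have h2 : w 0 = -(M i 1 * w 1) / M i 0 := by field_simp; linear_combination hrw
      rw [h1, h2]; field_simp; ring
    · have h1 : v 1 = -(M i 0 * v 0) / M i 1 := by field_simp; linear_combination hrv
      have h2 : w 1 = -(M i 0 * w 0) / M i 1 := by field_simp; linear_combination hrw
      rw [h1, h2]; field_simp; ring
  have hvne : v 0 ≠ 0 ∨ v 1 ≠ 0 := by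
    by_contra hcon
    push_neg at hcon
    apply hv0; funext k; fin_cases k <;> simp [hcon.1, hcon.2]
  rcases hvne with h0 | h0
  · refine ⟨w 0 / v 0, ?_⟩
    have e0 : w 0 = w 0 / v 0 * v 0 := by field_simp
    have e1 : w 1 = w 0 / v 0 * v 1 := by
      rw [div_mul_eq_mul_div, eq_div_iff h0]
      linear_combination hcross
    funext k; fin_cases k
    · simpa using e0
    · simpa using e1
  · refine ⟨w 1 / v 1, ?_⟩
    have e1 : w 1 = w 1 / v 1 * v 1 := by field_simp
    have e0 : w 0 = w 1 / v 1 * v 0 := by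
      rw [div_mul_eq_mul_div, eq_div_iff h0]
      linear_combination -hcross
    funext k; fin_cases k
    · simpa using e0
    · simpa using e1

lemma map_conj_conj (X : Matrix (Fin 2) (Fin 2) ℂ) :
    (X.map (starRingEnd ℂ)).map (starRingEnd ℂ) = X := by
  ext i j; simp

lemma neg_root_scalar (X : Matrix (Fin 2) (Fin 2) ℂ) (lam : ℝ) (hlam : lam < 0)
    (hdet : ((lam : ℂ) • (1 : Matrix (Fin 2) (Fin 2) ℂ) - X * X.map (starRingEnd ℂ)).det = 0) :
    X * X.map (starRingEnd ℂ) = (lam : ℂ) • 1 := by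
  set Xb := X.map (starRingEnd ℂ) with hXb
  set M := (lam : ℂ) • (1 : Matrix (Fin 2) (Fin 2) ℂ) - X * Xb with hMdef
  by_cases hM : M = 0
  · exact (sub_eq_zero.mp hM).symm
  exfalso
  obtain ⟨v, hv0, hv⟩ := Matrix.exists_mulVec_eq_zero_iff.mpr hdet
  have hmulv : ∀ u : Fin 2 → ℂ, M.mulVec u = 0 ↔ (X * Xb).mulVec u = (lam : ℂ) • u := by
    intro u
    rw [hMdef, Matrix.sub_mulVec, Matrix.smul_mulVec, Matrix.one_mulVec, sub_eq_zero]
    exact eq_comm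
  have hAv : (X * Xb).mulVec v = (lam : ℂ) • v := (hmulv v).mp hv
  set vb : Fin 2 → ℂ := fun i => (starRingEnd ℂ) (v i) with hvb
  set w : Fin 2 → ℂ := X.mulVec vb with hw
  -- step (2): (Xb * X) *ᵥ vb = lam • vb
  have hBA : (Xb * X).mulVec vb = (lam : ℂ) • vb := by
    have h1 := conj_mulVec (X * Xb) v
    have h2 : (X * Xb).map (starRingEnd ℂ) = Xb * X := by
      rw [Matrix.map_mul, ← hXb, map_conj_conj]
    rw [h2, hAv] at h1
    rw [← hvb] at h1
    rw [h1]
    funext i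
    simp [Complex.conj_ofReal, hvb]
  -- step (3): A *ᵥ w = lam • w
  have hAw : (X * Xb).mulVec w = (lam : ℂ) • w := by
    rw [hw, ← Matrix.mulVec_mulVec]
    have h3 : Xb.mulVec (X.mulVec vb) = (lam : ℂ) • vb := by
      rw [Matrix.mulVec_mulVec]; exact hBA
    rw [h3, Matrix.mulVec_smul]
  have hMw : M.mulVec w = 0 := (hmulv w).mpr hAw
  obtain ⟨c, hc⟩ := dep_of_ker hM hv hMw hv0
  -- step (6): Xb *ᵥ v = conj c • vb
  have hXbv : Xb.mulVec v = (starRingEnd ℂ) c • vb := by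
    have h1 := conj_mulVec X vb
    have h2 : (fun i => (starRingEnd ℂ) (vb i)) = v := by
      funext i; rw [hvb]; simp
    rw [h2, ← hXb, ← hw, hc] at h1
    rw [h1]
    funext i
    simp [hvb, mul_comm]
  -- step (7)
  have h7 : (lam : ℂ) • v = ((starRingEnd ℂ) c * c) • v := by
    rw [← hAv, ← Matrix.mulVec_mulVec, hXbv, Matrix.mulVec_smul, ← hw, hc, smul_smul]
  obtain ⟨i, hvi⟩ : ∃ i, v i ≠ 0 := by
    by_contra hcon
    push_neg at hcon
    exact hv0 (funext hcon)
  have h8 : (lam : ℂ) = (starRingEnd ℂ) c * c := by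
    have := congrFun h7 i
    simp only [Pi.smul_apply, smul_eq_mul] at this
    exact mul_right_cancel₀ hvi this
  have h9 : (0 : ℝ) ≤ lam := by
    have : (lam : ℂ) = Complex.normSq c := by
      rw [h8, Complex.normSq_eq_conj_mul_self]
    have hre := congrArg Complex.re this
    simp at hre
    rw [hre]
    exact Complex.normSq_nonneg c
  linarith


/-- if the characteristic polynomial of `X·X̄` has two real
non-positive roots, they coincide. -/
theorem stmt5 (X : Matrix (Fin 2) (Fin 2) ℂ) (l m : ℝ)
    (h : (X * X.map (starRingEnd ℂ)).charpoly =
      (Polynomial.X - Polynomial.C (l:ℂ)) * (Polynomial.X - Polynomial.C (m:ℂ)))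
    (hl : l ≤ 0) (hm : m ≤ 0) : l = m := by
  set A := X * X.map (starRingEnd ℂ) with hAdef
  have he : ∀ x : ℂ, Polynomial.eval x A.charpoly
      = (x • (1 : Matrix (Fin 2) (Fin 2) ℂ) - A).det := by
    intro x
    rw [Matrix.charpoly, Matrix.det_fin_two, Matrix.det_fin_two]
    rw [Matrix.charmatrix_apply_eq, Matrix.charmatrix_apply_eq,
        Matrix.charmatrix_apply_ne _ _ _ (by decide : (0 : Fin 2) ≠ 1),
        Matrix.charmatrix_apply_ne _ _ _ (by decide : (1 : Fin 2) ≠ 0)]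
    simp [Matrix.sub_apply, Matrix.smul_apply, Matrix.one_apply]
  have hl0 : ((l : ℂ) • (1 : Matrix (Fin 2) (Fin 2) ℂ) - A).det = 0 := by
    rw [← he l, h]; simp
  have hm0 : ((m : ℂ) • (1 : Matrix (Fin 2) (Fin 2) ℂ) - A).det = 0 := by
    rw [← he m, h]; simp
  have key : ∀ a b : ℝ, a < 0 →
      ((a : ℂ) • (1 : Matrix (Fin 2) (Fin 2) ℂ) - A).det = 0 →
      ((b : ℂ) • (1 : Matrix (Fin 2) (Fin 2) ℂ) - A).det = 0 → b = a := by
    intro a b ha hda hdb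
    have hAa := neg_root_scalar X a ha hda
    rw [← hAdef] at hAa
    rw [hAa, ← sub_smul, Matrix.det_smul, Matrix.det_one] at hdb
    have h2 : ((b : ℂ) - a) ^ 2 = 0 := by simpa using hdb
    have h3 : (b : ℂ) = (a : ℂ) := by
      have := pow_eq_zero_iff (n := 2) (by norm_num) |>.mp h2
      linear_combination this
    exact_mod_cast h3
  by_cases hlm : l = m
  · exact hlm
  rcases lt_or_eq_of_le hl with hl' | hl'
  · exact (key l m hl' hl0 hm0).symm
  · have hm' : m < 0 := lt_of_le_of_ne hm (fun hme => hlm (hl'.trans hme.symm))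
    exact key m l hm' hm0 hl0

end
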